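/- arXiv:2212.11967 — 5 statements merged into one kernel-verified Lean document; each statement's English description precedes it below -/
import Mathlib

section
/- Let α, κ > 0, let z ≥ 0 be a real number, and let Z̃ be a real-valued random variable (an estimator of z). Define RMSE_α(Z̃, z) = sqrt(E[(max{|Z̃ − z| − α·z, 0})²]) and REL_κ(Z̃, z) = E[|Z̃ − z|] / max{z, κ}. Then REL_κ(Z̃, z) ≤ √2 · (RMSE_α(Z̃, z)/κ + α). -/
open MeasureTheory

theorem rel_le_sqrt_two_mul_rmse
    {Ω : Type*} [MeasurableSpace Ω] (μ : Measure Ω) [IsProbabilityMeasure μ]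
    (Z : Ω → ℝ) (z α κ : ℝ) (hz : 0 ≤ z) (hα : 0 < α) (hκ : 0 < κ)
    (h1 : Integrable (fun ω => |Z ω - z|) μ)
    (h2 : Integrable (fun ω => (max (|Z ω - z| - α * z) 0)^2) μ) :
    (∫ ω, |Z ω - z| ∂μ) / max z κ ≤
      Real.sqrt 2 *
        (Real.sqrt (∫ ω, (max (|Z ω - z| - α * z) 0)^2 ∂μ) / κ + α) := by
  set Y : Ω → ℝ := fun ω => max (|Z ω - z| - α * z) 0 with hY
  have hYnn : ∀ ω, 0 ≤ Y ω := fun ω => le_max_right _ _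
  have hYint : Integrable Y μ := by
    refine h1.mono ?_ (.of_forall fun ω => ?_)
    · exact ((h1.aestronglyMeasurable.sub aestronglyMeasurable_const).sup
        aestronglyMeasurable_const)
    · rw [Real.norm_eq_abs, Real.norm_eq_abs, abs_of_nonneg (hYnn ω), abs_abs]
      exact max_le (by nlinarith [abs_nonneg (Z ω - z), mul_nonneg hα.le hz])
        (abs_nonneg _)
  have hI2nn : 0 ≤ ∫ ω, (Y ω)^2 ∂μ :=
    integral_nonneg fun ω => sq_nonneg _
  -- E Y ≤ sqrt (E Y²)
  have hmem : MemLp Y 2 μ :=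
    (memLp_two_iff_integrable_sq hYint.aestronglyMeasurable).2 h2
  have hvar := ProbabilityTheory.variance_nonneg Y μ
  rw [ProbabilityTheory.variance_eq_sub hmem] at hvar
  simp only [Pi.pow_apply] at hvar
  have hEY : ∫ ω, Y ω ∂μ ≤ Real.sqrt (∫ ω, (Y ω)^2 ∂μ) := by
    have h0 : 0 ≤ ∫ ω, Y ω ∂μ := integral_nonneg hYnn
    nlinarith [Real.sq_sqrt hI2nn, Real.sqrt_nonneg (∫ ω, (Y ω)^2 ∂μ)]
  -- E|Z-z| ≤ E Y + α z
  have hE : ∫ ω, |Z ω - z| ∂μ ≤ (∫ ω, Y ω ∂μ) + α * z := by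
    have : ∫ ω, |Z ω - z| ∂μ ≤ ∫ ω, (Y ω + α * z) ∂μ := by
      refine integral_mono h1 (hYint.add (integrable_const _)) fun ω => ?_
      have := le_max_left (|Z ω - z| - α * z) 0
      linarith
    simpa [integral_add hYint (integrable_const _)] using this
  have hmaxpos : 0 < max z κ := lt_max_of_lt_right hκ
  have hS : 0 ≤ Real.sqrt (∫ ω, (Y ω)^2 ∂μ) := Real.sqrt_nonneg _
  have key : (∫ ω, |Z ω - z| ∂μ) / max z κ ≤
      Real.sqrt (∫ ω, (Y ω)^2 ∂μ) / κ + α := by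
    rw [div_le_iff₀ hmaxpos]
    have h3 : Real.sqrt (∫ ω, (Y ω)^2 ∂μ) / κ * max z κ ≥
        Real.sqrt (∫ ω, (Y ω)^2 ∂μ) := by
      rw [div_mul_eq_mul_div, ge_iff_le, le_div_iff₀ hκ]
      exact mul_le_mul_of_nonneg_left (le_max_right _ _) hS
    have h4 : α * z ≤ α * max z κ := mul_le_mul_of_nonneg_left (le_max_left _ _) hα.le
    calc ∫ ω, |Z ω - z| ∂μ ≤ (∫ ω, Y ω ∂μ) + α * z := hE
      _ ≤ Real.sqrt (∫ ω, (Y ω)^2 ∂μ) + α * z := by linarith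
      _ ≤ (Real.sqrt (∫ ω, (Y ω)^2 ∂μ) / κ + α) * max z κ := by
          rw [add_mul]; linarith
  have hsqrt2 : (1:ℝ) ≤ Real.sqrt 2 := by
    rw [show (1:ℝ) = Real.sqrt 1 by simp]
    exact Real.sqrt_le_sqrt (by norm_num)
  have hrhs : 0 ≤ Real.sqrt (∫ ω, (Y ω)^2 ∂μ) / κ + α :=
    add_nonneg (div_nonneg hS hκ.le) hα.le
  calc (∫ ω, |Z ω - z| ∂μ) / max z κ ≤ Real.sqrt (∫ ω, (Y ω)^2 ∂μ) / κ + α := key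
    _ ≤ Real.sqrt 2 * (Real.sqrt (∫ ω, (Y ω)^2 ∂μ) / κ + α) := by
        nlinarith
end

section
/- Let α' > α ≥ 0, η > 0, τ > 0, let w ≥ 0 be a real number and W̃ a real-valued random variable. If sqrt(E[(max{|W̃ − w| − α·w, 0})²]) ≤ (α' − α)·√η·τ, then Pr[|W̃ − w| > α'·max{w, τ}] ≤ η. -/
open MeasureTheory

theorem accuracy_from_mrmse
    {Ω : Type*} [MeasurableSpace Ω] (μ : Measure Ω) [IsProbabilityMeasure μ]
    (W : Ω → ℝ) (hW : Measurable W)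
    (w α α' η τ : ℝ) (hw : 0 ≤ w) (hα : 0 ≤ α) (hα' : α < α') (hη : 0 < η) (hτ : 0 < τ)
    (h2 : Integrable (fun ω => (max (|W ω - w| - α * w) 0)^2) μ)
    (hrmse : Real.sqrt (∫ ω, (max (|W ω - w| - α * w) 0)^2 ∂μ) ≤ (α' - α) * Real.sqrt η * τ) :
    μ {ω | α' * max w τ < |W ω - w|} ≤ ENNReal.ofReal η := by
  set f : Ω → ℝ := fun ω => (max (|W ω - w| - α * w) 0)^2 with hf
  have hc : (0:ℝ) < (α' - α) * τ := mul_pos (by linarith) hτ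
  have hInt : (0:ℝ) ≤ ∫ ω, f ω ∂μ := integral_nonneg fun ω => sq_nonneg _
  -- bound the integral
  have hIb : ∫ ω, f ω ∂μ ≤ (α' - α)^2 * η * τ^2 := by
    have := Real.sqrt_le_sqrt_iff (x := ∫ ω, f ω ∂μ) (by positivity)
    have h := hrmse
    have hr : ((α' - α) * Real.sqrt η * τ)^2 = (α' - α)^2 * η * τ^2 := by
      rw [mul_pow, mul_pow, Real.sq_sqrt hη.le]
    calc ∫ ω, f ω ∂μ = (Real.sqrt (∫ ω, f ω ∂μ))^2 := (Real.sq_sqrt hInt).symm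
      _ ≤ ((α' - α) * Real.sqrt η * τ)^2 := by
          apply pow_le_pow_left₀ (Real.sqrt_nonneg _) h
      _ = (α' - α)^2 * η * τ^2 := hr
  -- event inclusion
  have hsub : {ω | α' * max w τ < |W ω - w|} ⊆ {ω | ((α' - α) * τ)^2 ≤ f ω} := by
    intro ω hω
    simp only [Set.mem_setOf_eq] at hω ⊢
    have h1 : (α' - α) * τ ≤ max (|W ω - w| - α * w) 0 := by
      have : (α' - α) * τ ≤ (α' - α) * max w τ := by
        apply mul_le_mul_of_nonneg_left (le_max_right _ _) (by linarith)
      have h2 : α * w ≤ α * max w τ := mul_le_mul_of_nonneg_left (le_max_left _ _) hα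
      have : (α' - α) * τ ≤ |W ω - w| - α * w := by nlinarith [le_max_left w τ]
      exact le_max_of_le_left this
    calc ((α' - α) * τ)^2 ≤ (max (|W ω - w| - α * w) 0)^2 := by
          apply pow_le_pow_left₀ hc.le h1
      _ = f ω := rfl
  have hmarkov := mul_meas_ge_le_integral_of_nonneg
    (μ := μ) (f := f) (ae_of_all _ fun ω => sq_nonneg _) h2 (((α' - α) * τ)^2)
  have hmeas : (μ {ω | ((α' - α) * τ)^2 ≤ f ω}).toReal ≤ η := by
    rw [← mul_le_mul_iff_right₀ (by positivity : (0:ℝ) < ((α' - α) * τ)^2)]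
    calc ((α' - α) * τ)^2 * (μ {ω | ((α' - α) * τ)^2 ≤ f ω}).toReal
        ≤ ∫ ω, f ω ∂μ := hmarkov
      _ ≤ (α' - α)^2 * η * τ^2 := hIb
      _ = ((α' - α) * τ)^2 * η := by ring
  calc μ {ω | α' * max w τ < |W ω - w|} ≤ μ {ω | ((α' - α) * τ)^2 ≤ f ω} :=
        measure_mono hsub
    _ = ENNReal.ofReal (μ {ω | ((α' - α) * τ)^2 ≤ f ω}).toReal := by
        rw [ENNReal.ofReal_toReal (measure_ne_top μ _)]
    _ ≤ ENNReal.ofReal η := ENNReal.ofReal_le_ofReal hmeas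
end

section
/- Let d ≥ 1 and η ∈ (0, 1/4]. Set κ = 1 − 4η ∈ [1/2, 1). For all nonnegative integers A, B, C with A + B + C = d − 1, d − 1 − B ≤ 4η(d−1), and C ≤ 4η(d−1), one has 2^{−A} · κ^B · (1 − κ)^C ≥ 2^{−(d−1)·H(4η)}, where H(x) = x·log₂(1/x) + (1−x)·log₂(1/(1−x)) is the binary entropy function. -/
noncomputable def binEntropy (x : ℝ) : ℝ :=
  x * Real.logb 2 (1 / x) + (1 - x) * Real.logb 2 (1 / (1 - x))

theorem decoding_probability_lower_bound
    (d : ℕ) (hd : 1 ≤ d) (η : ℝ) (hη0 : 0 < η) (hη1 : η ≤ 1/4)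
    (κ : ℝ) (hκdef : κ = 1 - 4 * η) (hκhalf : 1/2 ≤ κ)
    (A B C : ℕ) (hABC : A + B + C = d - 1)
    (hB : ((d : ℝ) - 1) - B ≤ 4 * η * ((d : ℝ) - 1))
    (hC : (C : ℝ) ≤ 4 * η * ((d : ℝ) - 1)) :
    (2 : ℝ) ^ (-(A : ℝ)) * κ ^ B * (1 - κ) ^ C ≥
      (2 : ℝ) ^ (-(((d : ℝ) - 1) * binEntropy (4 * η))) := by
  have hκpos : 0 < κ := lt_of_lt_of_le (by norm_num) hκhalf
  have hεpos : 0 < 4 * η := by linarith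
  have hεhalf : 4 * η ≤ 1 / 2 := by rw [hκdef] at hκhalf; linarith
  have h1κ : 1 - κ = 4 * η := by rw [hκdef]; ring
  set n : ℝ := (d : ℝ) - 1 with hn
  have hnn : 0 ≤ n := by
    have : (1 : ℝ) ≤ (d : ℝ) := by exact_mod_cast hd
    simp [hn]; linarith
  have hABCr : (A : ℝ) + B + C = n := by
    have h1 : ((A + B + C : ℕ) : ℝ) = ((d - 1 : ℕ) : ℝ) := by rw [hABC]
    rw [Nat.cast_sub hd] at h1
    push_cast at h1 ⊢
    simpa [hn] using h1
  -- logarithm facts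
  set L1 : ℝ := Real.logb 2 (4 * η) with hL1
  set L2 : ℝ := Real.logb 2 κ with hL2
  have h12 : Real.logb 2 (1 / 2 : ℝ) = -1 := by
    rw [one_div, Real.logb_inv, Real.logb_self_eq_one (by norm_num)]
  have hL1le : L1 ≤ -1 := by
    have h := Real.logb_le_logb_of_le (b := 2) (by norm_num) hεpos hεhalf
    rw [h12] at h; exact h
  have hL2le : L2 ≤ 0 := by
    have hκ1 : κ ≤ 1 := by rw [hκdef]; linarith
    exact Real.logb_nonpos (by norm_num) hκpos.le hκ1
  have hL2ge : -1 ≤ L2 := by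
    have h := Real.logb_le_logb_of_le (b := 2) (by norm_num) (by norm_num : (0:ℝ) < 1/2) hκhalf
    rw [h12] at h; exact h
  -- rewrite LHS as a single power of 2
  have hκB : κ ^ B = (2 : ℝ) ^ ((B : ℝ) * L2) := by
    rw [hL2, mul_comm ((B:ℝ)), Real.rpow_mul (by norm_num : (0:ℝ) ≤ 2),
      Real.rpow_logb (by norm_num) (by norm_num) hκpos, Real.rpow_natCast]
  have hεC : (1 - κ) ^ C = (2 : ℝ) ^ ((C : ℝ) * L1) := by
    rw [h1κ, hL1, mul_comm ((C:ℝ)), Real.rpow_mul (by norm_num : (0:ℝ) ≤ 2),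
      Real.rpow_logb (by norm_num) (by norm_num) hεpos, Real.rpow_natCast]
  rw [hκB, hεC, ← Real.rpow_add (by norm_num : (0:ℝ) < 2),
    ← Real.rpow_add (by norm_num : (0:ℝ) < 2), ge_iff_le,
    Real.rpow_le_rpow_left_iff (by norm_num : (1:ℝ) < 2)]
  -- exponent inequality
  have hBE : binEntropy (4 * η) = 4 * η * (-L1) + κ * (-L2) := by
    rw [binEntropy, ← hκdef, one_div, one_div, Real.logb_inv, Real.logb_inv, hL1, hL2]
  rw [hBE]
  have hBge : n * κ ≤ (B : ℝ) := by
    rw [hκdef]; nlinarith [hB]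
  have hp1 : 0 ≤ ((B : ℝ) - n * κ) * (1 + L2) := by
    apply mul_nonneg (by linarith) (by linarith)
  have hp2 : 0 ≤ (4 * η * n - (C : ℝ)) * (-L1 - 1) := by
    apply mul_nonneg (by linarith) (by linarith)
  have hκε : κ + 4 * η = 1 := by rw [hκdef]; ring
  nlinarith [hp1, hp2, hABCr, hκε, hnn]
end

section
/- Let D : Ω → [N] be a (measurable) decoder and A a randomized algorithm such that for each i ∈ [N], Pr[D(A(x^i)) = i] ≥ p for inputs x¹, ..., x^N. Suppose A is (ε, δ)-DP with respect to ℓ₁-neighbors and ‖x^i − x^j‖₁ ≤ D₀ for all i, j. Then p ≤ e^{ε·D₀}/N + δ·(e^{ε·D₀} − 1)/(e^ε − 1). -/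
open MeasureTheory Finset
open scoped ENNReal

lemma packing_step_exists {n : ℕ} (x x' : Fin n → ℤ) (d : ℕ)
    (h : (∑ l, |x l - x' l|) = (d : ℤ) + 1) :
    ∃ x'' : Fin n → ℤ, (∑ l, |x l - x'' l|) = 1 ∧ (∑ l, |x'' l - x' l|) = (d : ℤ) := by
  have hex : ∃ l, x l ≠ x' l := by
    by_contra hc
    push_neg at hc
    have : (∑ l, |x l - x' l|) = 0 := by
      apply Finset.sum_eq_zero
      intro l _
      simp [hc l]
    omega
  obtain ⟨l, hl⟩ := hex
  set s : ℤ := if x' l < x l then 1 else -1 with hs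
  refine ⟨Function.update x l (x l - s), ?_, ?_⟩
  · have hz : ∀ m : Fin n, m ≠ l → |x m - Function.update x l (x l - s) m| = 0 := by
      intro m hm
      simp [Function.update_of_ne hm]
    rw [← Finset.add_sum_erase _ _ (Finset.mem_univ l)]
    rw [Finset.sum_eq_zero (fun m hm => hz m (Finset.ne_of_mem_erase hm))]
    have hsabs : |s| = 1 := by
      rcases le_or_gt (x l) (x' l) with h1 | h1
      · simp [hs, not_lt.mpr h1]
      · simp [hs, h1]
    simp [Function.update_self, hsabs]
  · have key : |x l - s - x' l| = |x l - x' l| - 1 := by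
      rcases lt_trichotomy (x' l) (x l) with h1 | h1 | h1
      · simp only [hs, if_pos h1]
        rw [abs_of_nonneg (by omega), abs_of_nonneg (by omega)]
        ring
      · exact absurd h1.symm hl
      · simp only [hs, if_neg (not_lt.mpr h1.le)]
        rw [abs_of_nonpos (by omega), abs_of_nonpos (by omega)]
        ring
    have hrest : ∀ m : Fin n, m ≠ l →
        |Function.update x l (x l - s) m - x' m| = |x m - x' m| := by
      intro m hm
      simp [Function.update_of_ne hm]
    rw [← Finset.add_sum_erase _ (fun m => |Function.update x l (x l - s) m - x' m|)
      (Finset.mem_univ l)]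
    rw [Finset.sum_congr rfl (fun m hm => hrest m (Finset.ne_of_mem_erase hm))]
    rw [← Finset.add_sum_erase _ (fun m => |x m - x' m|) (Finset.mem_univ l)] at h
    rw [Function.update_self, key]
    omega

lemma packing_group {Ω : Type*} [MeasurableSpace Ω] {n : ℕ}
    (A : (Fin n → ℤ) → Measure Ω)
    (ε δ : ℝ) (hε : 0 < ε) (hδ : 0 ≤ δ)
    (hDP : ∀ x x' : Fin n → ℤ, (∑ i, |x i - x' i|) = 1 →
      ∀ S : Set Ω, MeasurableSet S →
        A x S ≤ ENNReal.ofReal (Real.exp ε) * A x' S + ENNReal.ofReal δ)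
    (k : ℕ) :
    ∀ x x' : Fin n → ℤ, (∑ l, |x l - x' l|) ≤ (k : ℤ) →
      ∀ S : Set Ω, MeasurableSet S →
        A x S ≤ ENNReal.ofReal (Real.exp (ε * k)) * A x' S +
          ENNReal.ofReal (δ * (Real.exp (ε * k) - 1) / (Real.exp ε - 1)) := by
  induction k with
  | zero =>
    intro x x' h S hS
    have hx : x = x' := by
      funext l
      have h1 : ∀ m ∈ Finset.univ, (0:ℤ) ≤ |x m - x' m| := fun m _ => abs_nonneg _
      have h2 : |x l - x' l| ≤ ∑ m, |x m - x' m| :=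
        Finset.single_le_sum h1 (Finset.mem_univ l)
      have h3 : (0:ℤ) ≤ ∑ m, |x m - x' m| := Finset.sum_nonneg h1
      have h4 : |x l - x' l| = 0 := le_antisymm (by omega) (abs_nonneg _)
      have h5 := abs_eq_zero.mp h4
      omega
    subst hx
    simp
  | succ k ih =>
    intro x x' h S hS
    have hE1 : (1:ℝ) < Real.exp ε := by
      rw [← Real.exp_zero]; exact Real.exp_lt_exp.mpr hε
    have hek : (1:ℝ) ≤ Real.exp (ε * k) := by
      rw [← Real.exp_zero]; exact Real.exp_le_exp.mpr (by positivity)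
    have hmono : Real.exp (ε * k) ≤ Real.exp (ε * (k+1:ℕ)) := by
      apply Real.exp_le_exp.mpr
      push_cast
      nlinarith [hε.le]
    have hsucc : Real.exp (ε * (k+1:ℕ)) = Real.exp ε * Real.exp (ε * k) := by
      rw [← Real.exp_add]
      congr 1
      push_cast
      ring
    rcases le_or_gt (∑ l, |x l - x' l|) (k : ℤ) with hle | hgt
    · calc A x S ≤ ENNReal.ofReal (Real.exp (ε * k)) * A x' S +
          ENNReal.ofReal (δ * (Real.exp (ε * k) - 1) / (Real.exp ε - 1)) := ih x x' hle S hS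
        _ ≤ _ := by
          apply add_le_add
          · exact mul_le_mul_left (ENNReal.ofReal_le_ofReal hmono) _
          · apply ENNReal.ofReal_le_ofReal
            exact (div_le_div_iff_of_pos_right (by linarith)).mpr (by nlinarith)
    · have heq : (∑ l, |x l - x' l|) = (k : ℤ) + 1 := by
        push_cast at h ⊢; omega
      obtain ⟨x'', h1, h2⟩ := packing_step_exists x x' k heq
      have step := hDP x x'' h1 S hS
      have rest := ih x'' x' (le_of_eq h2) S hS
      calc A x S ≤ ENNReal.ofReal (Real.exp ε) * A x'' S + ENNReal.ofReal δ := step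
        _ ≤ ENNReal.ofReal (Real.exp ε) *
              (ENNReal.ofReal (Real.exp (ε * k)) * A x' S +
                ENNReal.ofReal (δ * (Real.exp (ε * k) - 1) / (Real.exp ε - 1))) +
              ENNReal.ofReal δ := by
            exact add_le_add (mul_le_mul_right rest _) le_rfl
        _ = _ := by
          rw [mul_add, ← mul_assoc, ← ENNReal.ofReal_mul (Real.exp_pos ε).le,
            ← ENNReal.ofReal_mul (Real.exp_pos ε).le, add_assoc,
            ← ENNReal.ofReal_add (mul_nonneg (Real.exp_pos ε).le
              (div_nonneg (by nlinarith) (by linarith))) hδ]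
          congr 2
          · rw [hsucc]
          · have hne : Real.exp ε - 1 ≠ 0 := by linarith
            rw [hsucc]
            field_simp
            ring

theorem packing_argument
    {Ω : Type*} [MeasurableSpace Ω] {n N : ℕ} (hN : 1 ≤ N)
    (A : (Fin n → ℤ) → Measure Ω) (hA : ∀ x, IsProbabilityMeasure (A x))
    (D : Ω → Fin N) (hD : Measurable D)
    (ε δ : ℝ) (hε : 0 < ε) (hδ : 0 ≤ δ)
    (hDP : ∀ x x' : Fin n → ℤ, (∑ i, |x i - x' i|) = 1 →
      ∀ S : Set Ω, MeasurableSet S →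
        A x S ≤ ENNReal.ofReal (Real.exp ε) * A x' S + ENNReal.ofReal δ)
    (x : Fin N → (Fin n → ℤ)) (D₀ : ℕ)
    (hdist : ∀ i j : Fin N, (∑ l, |x i l - x j l|) ≤ (D₀ : ℤ))
    (p : ℝ)
    (hp : ∀ i : Fin N, ENNReal.ofReal p ≤ A (x i) {ω | D ω = i}) :
    p ≤ Real.exp (ε * D₀) / N +
      δ * (Real.exp (ε * D₀) - 1) / (Real.exp ε - 1) := by
  have hE1 : (1:ℝ) < Real.exp ε := by
    rw [← Real.exp_zero]; exact Real.exp_lt_exp.mpr hε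
  have hek : (1:ℝ) ≤ Real.exp (ε * D₀) := by
    rw [← Real.exp_zero]; exact Real.exp_le_exp.mpr (by positivity)
  have hc0 : 0 ≤ δ * (Real.exp (ε * D₀) - 1) / (Real.exp ε - 1) :=
    div_nonneg (by nlinarith) (by linarith)
  set S : Fin N → Set Ω := fun i => {ω | D ω = i} with hSdef
  have hSmeas : ∀ i, MeasurableSet (S i) := by
    intro i
    have : S i = D ⁻¹' {i} := by ext ω; simp [hSdef]
    rw [this]
    exact hD (measurableSet_singleton i)
  have j0 : Fin N := ⟨0, hN⟩
  set μ := A (x j0) with hμ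
  have hsum : ∑ i, μ (S i) = 1 := by
    have h1 : ∀ i ∈ Finset.univ, MeasurableSet (D ⁻¹' {i}) :=
      fun i _ => hD (measurableSet_singleton i)
    have h2 := MeasureTheory.sum_measure_preimage_singleton (μ := μ) Finset.univ h1
    have h3 : ∀ i, S i = D ⁻¹' {i} := fun i => by ext ω; simp [hSdef]
    simp only [h3]
    rw [h2]
    simp [measure_univ]
  obtain ⟨i₀, -, hmin⟩ := Finset.exists_min_image Finset.univ (fun i => μ (S i))
    ⟨j0, Finset.mem_univ j0⟩
  have hNμ : (N : ℝ≥0∞) * μ (S i₀) ≤ 1 := by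
    calc (N : ℝ≥0∞) * μ (S i₀) = ∑ _i : Fin N, μ (S i₀) := by
          simp [Finset.sum_const, nsmul_eq_mul]
      _ ≤ ∑ i, μ (S i) := Finset.sum_le_sum (fun i hi => hmin i hi)
      _ = 1 := hsum
  have hmin' : μ (S i₀) ≤ 1 / (N : ℝ≥0∞) := by
    have hN0 : (N : ℝ≥0∞) ≠ 0 := by
      simp
      omega
    rw [ENNReal.le_div_iff_mul_le (Or.inl hN0) (Or.inl (ENNReal.natCast_ne_top N))]
    rw [mul_comm] at hNμ
    exact hNμ
  have hgroup := packing_group A ε δ hε hδ hDP D₀ (x i₀) (x j0) (hdist i₀ j0)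
    (S i₀) (hSmeas i₀)
  have hchain : ENNReal.ofReal p ≤
      ENNReal.ofReal (Real.exp (ε * D₀) / N +
        δ * (Real.exp (ε * D₀) - 1) / (Real.exp ε - 1)) := by
    calc ENNReal.ofReal p ≤ A (x i₀) (S i₀) := hp i₀
      _ ≤ ENNReal.ofReal (Real.exp (ε * D₀)) * μ (S i₀) +
          ENNReal.ofReal (δ * (Real.exp (ε * D₀) - 1) / (Real.exp ε - 1)) := hgroup
      _ ≤ ENNReal.ofReal (Real.exp (ε * D₀)) * (1 / (N : ℝ≥0∞)) +
          ENNReal.ofReal (δ * (Real.exp (ε * D₀) - 1) / (Real.exp ε - 1)) := by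
          exact add_le_add (mul_le_mul_right hmin' _) le_rfl
      _ = ENNReal.ofReal (Real.exp (ε * D₀) / N) +
          ENNReal.ofReal (δ * (Real.exp (ε * D₀) - 1) / (Real.exp ε - 1)) := by
          congr 1
          rw [ENNReal.ofReal_div_of_pos (by exact_mod_cast hN),
            ENNReal.ofReal_natCast, mul_one_div]
      _ = _ := by
          rw [← ENNReal.ofReal_add (by positivity) hc0]
  have hrhs : 0 ≤ Real.exp (ε * D₀) / N +
      δ * (Real.exp (ε * D₀) - 1) / (Real.exp ε - 1) := by positivity
  exact (ENNReal.ofReal_le_ofReal_iff hrhs).mp hchain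
end

section
/- Let M be the matrix from the binary-tree Gram computation: M_{j,k} = λ·∑_{ℓ=0}^{d−1} 2^{−ℓ}·1{leaves j,k share their depth-ℓ ancestor}, λ = 1/(n·d), n = 2^{d−1}, d ≥ 3. For an internal node i at depth ℓ ≤ d−2 with children i_L, i_R, let z^i ∈ ℝⁿ be +1 on leaves under i_L, −1 on leaves under i_R, and 0 elsewhere. Then z^i is an eigenvector of M with eigenvalue λ·∑_{ℓ'=ℓ+1}^{d−1} 2^{d−1−ℓ'}/2^{ℓ'} ≥ λ·n/2^{2(ℓ+1)}. -/
open Finset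

/-- Sum over a block of the quotient function. -/
lemma sum_block (n B c : ℕ) (hB : 0 < B) (hc : (c + 1) * B ≤ n) (f : ℕ → ℝ) :
    ∑ k ∈ range n, (if k / B = c then f k else 0) = ∑ t ∈ range B, f (c * B + t) := by
  rw [← Finset.sum_filter]
  have hfil : (range n).filter (fun k => k / B = c) = Ico (c * B) (c * B + B) := by
    ext k
    simp only [Finset.mem_filter, Finset.mem_range, Finset.mem_Ico]
    constructor
    · rintro ⟨hk, rfl⟩
      have h1 := Nat.div_add_mod k B
      have h2 := Nat.mod_lt k hB
      have h3 : k / B * B = B * (k / B) := Nat.mul_comm _ _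
      omega
    · rintro ⟨h1, h2⟩
      have h4 : (c + 1) * B = c * B + B := by ring
      have h5 : k / B = c := Nat.div_eq_of_lt_le h1 (by omega)
      omega
  rw [hfil, Finset.sum_Ico_eq_sum_range]
  simp

lemma sum_div_quot (F E : ℕ) (hF : 0 < F) (f : ℕ → ℝ) :
    ∑ t ∈ range (E * F), f (t / F) = F * ∑ q ∈ range E, f q := by
  induction E with
  | zero => simp
  | succ E ih =>
    rw [Nat.succ_mul, Finset.sum_range_add, ih, Finset.sum_range_succ]
    have : ∀ x ∈ range F, f ((E * F + x) / F) = f E := by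
      intro x hx
      rw [Finset.mem_range] at hx
      congr 1
      rw [Nat.mul_comm, Nat.mul_add_div hF, Nat.div_eq_of_lt hx]
      omega
    rw [Finset.sum_congr rfl this, Finset.sum_const, Finset.card_range]
    push_cast
    ring

lemma cancel_pair (a u v : ℕ) :
    (∑ q ∈ range (2 * v), (if 2 * u + q = 2 * a then (1 : ℝ)
      else if 2 * u + q = 2 * a + 1 then -1 else 0)) = 0 := by
  have hrw : ∀ q ∈ range (2 * v),
      (if 2 * u + q = 2 * a then (1 : ℝ) else if 2 * u + q = 2 * a + 1 then -1 else 0)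
      = (if 2 * u + q = 2 * a then (1 : ℝ) else 0)
        + (if 2 * u + q = 2 * a + 1 then (-1 : ℝ) else 0) := by
    intro q _
    split_ifs with h1 h2 <;> simp_all <;> omega
  rw [Finset.sum_congr rfl hrw, Finset.sum_add_distrib]
  have key : ∀ b : ℕ, (∑ q ∈ range (2 * v), if 2 * u + q = b then (1 : ℝ) else 0)
      = if b ∈ Ico (2 * u) (2 * u + 2 * v) then (1 : ℝ) else 0 := by
    intro b
    rw [show (∑ q ∈ range (2 * v), if 2 * u + q = b then (1 : ℝ) else 0)
        = ∑ m ∈ Ico (2 * u) (2 * u + 2 * v), (if m = b then (1 : ℝ) else 0) by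
      rw [Finset.sum_Ico_eq_sum_range]; simp]
    exact Finset.sum_ite_eq' _ _ _
  have key2 : ∀ b : ℕ, (∑ q ∈ range (2 * v), if 2 * u + q = b then (-1 : ℝ) else 0)
      = if b ∈ Ico (2 * u) (2 * u + 2 * v) then (-1 : ℝ) else 0 := by
    intro b
    rw [show (∑ q ∈ range (2 * v), if 2 * u + q = b then (-1 : ℝ) else 0)
        = ∑ m ∈ Ico (2 * u) (2 * u + 2 * v), (if m = b then (-1 : ℝ) else 0) by
      rw [Finset.sum_Ico_eq_sum_range]; simp]
    exact Finset.sum_ite_eq' _ _ _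
  rw [key, key2]
  have hmem : (2 * a ∈ Ico (2 * u) (2 * u + 2 * v)) ↔ (2 * a + 1 ∈ Ico (2 * u) (2 * u + 2 * v)) := by
    simp only [Finset.mem_Ico]; omega
  split_ifs with h1 h2 h2 <;> simp_all

theorem signed_subtree_eigenvector (d : ℕ) (hd : 3 ≤ d)
    (n : ℕ) (hn : n = 2 ^ (d - 1)) (lam : ℝ) (hlam : lam = 1 / ((n : ℝ) * d))
    (M : Matrix (Fin n) (Fin n) ℝ)
    (hM : ∀ j k : Fin n, M j k = lam * ∑ ℓ' ∈ range d, ((2 : ℝ) ^ ℓ')⁻¹ *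
      (if (j : ℕ) / 2 ^ (d - 1 - ℓ') = (k : ℕ) / 2 ^ (d - 1 - ℓ') then (1 : ℝ) else 0))
    (ℓ a : ℕ) (hℓ : ℓ ≤ d - 2) (ha : a < 2 ^ ℓ)
    (z : Fin n → ℝ)
    (hz : ∀ j : Fin n, z j =
      if (j : ℕ) / 2 ^ (d - 2 - ℓ) = 2 * a then 1
      else if (j : ℕ) / 2 ^ (d - 2 - ℓ) = 2 * a + 1 then -1
      else 0) :
    M.mulVec z = (lam * ∑ ℓ' ∈ Ico (ℓ + 1) d, (2 : ℝ) ^ (d - 1 - ℓ') / 2 ^ ℓ') • z ∧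
    lam * (n : ℝ) / 2 ^ (2 * (ℓ + 1)) ≤
      lam * ∑ ℓ' ∈ Ico (ℓ + 1) d, (2 : ℝ) ^ (d - 1 - ℓ') / 2 ^ ℓ' := by
  set e := d - 2 - ℓ with he
  set zf : ℕ → ℝ := fun k => if k / 2 ^ e = 2 * a then (1 : ℝ)
    else if k / 2 ^ e = 2 * a + 1 then -1 else 0 with hzf
  -- key block sum computation
  have key : ∀ j : Fin n, ∀ ℓ' ∈ range d,
      (∑ k ∈ range n, (if (j : ℕ) / 2 ^ (d - 1 - ℓ') = k / 2 ^ (d - 1 - ℓ') then (1:ℝ) else 0) * zf k)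
      = if ℓ + 1 ≤ ℓ' then (2 : ℝ) ^ (d - 1 - ℓ') * zf (j : ℕ) else 0 := by
    intro j ℓ' hℓ'
    rw [Finset.mem_range] at hℓ'
    set e' := d - 1 - ℓ' with he'
    set c := (j : ℕ) / 2 ^ e' with hc
    have hrw : ∀ k ∈ range n,
        (if (j : ℕ) / 2 ^ e' = k / 2 ^ e' then (1:ℝ) else 0) * zf k
        = (if k / 2 ^ e' = c then zf k else 0) := by
      intro k _
      by_cases h : (j : ℕ) / 2 ^ e' = k / 2 ^ e'
      · rw [if_pos h, if_pos (by rw [hc]; exact h.symm), one_mul]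
      · rw [if_neg h, if_neg (by rw [hc]; exact fun hh => h hh.symm), zero_mul]
    rw [Finset.sum_congr rfl hrw]
    have hB : (0:ℕ) < 2 ^ e' := pow_pos (by norm_num : (0:ℕ) < 2) e'
    have he'd : e' ≤ d - 1 := by omega
    have hcb : (c + 1) * 2 ^ e' ≤ n := by
      have h1 : c < n / 2 ^ e' := by
        rw [hn, hc]
        have : (2:ℕ) ^ (d-1) / 2 ^ e' = 2 ^ (d - 1 - e') := by
          rw [Nat.pow_div he'd (by norm_num)]
        rw [this]
        have hj : (j : ℕ) < 2 ^ (d - 1) := by rw [← hn]; exact j.2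
        have : (j : ℕ) / 2 ^ e' < 2 ^ (d-1) / 2 ^ e' := by
          apply Nat.div_lt_div_of_lt_of_dvd
          · exact pow_dvd_pow 2 he'd
          · exact hj
        rwa [Nat.pow_div he'd (by norm_num)] at this
      calc (c+1) * 2^e' ≤ (n / 2^e') * 2^e' := by
            apply Nat.mul_le_mul_right; omega
        _ ≤ n := Nat.div_mul_le_self _ _
    rw [sum_block n (2^e') c hB hcb]
    by_cases hcase : ℓ + 1 ≤ ℓ'
    · -- small block: zf constant on it
      rw [if_pos hcase]
      have hee : e' ≤ e := by omega
      have hsplit : (2:ℕ) ^ e = 2 ^ e' * 2 ^ (e - e') := by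
        rw [← pow_add]; congr 1; omega
      have hconst : ∀ t ∈ range (2 ^ e'), zf (c * 2 ^ e' + t) = zf (j : ℕ) := by
        intro t ht
        rw [Finset.mem_range] at ht
        have hq : (c * 2 ^ e' + t) / 2 ^ e = (j : ℕ) / 2 ^ e := by
          rw [hsplit, ← Nat.div_div_eq_div_mul, ← Nat.div_div_eq_div_mul]
          congr 1
          rw [Nat.mul_comm c, Nat.mul_add_div hB, Nat.div_eq_of_lt ht, Nat.add_zero]
        simp only [hzf, hq]
      rw [Finset.sum_congr rfl hconst, Finset.sum_const, Finset.card_range]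
      push_cast
      ring
    · rw [if_neg hcase]
      have hle : ℓ' ≤ ℓ := by omega
      have hee : e + 1 ≤ e' := by omega
      set B' := 2 ^ (e' - e - 1) with hB'
      have hsplit : (2:ℕ) ^ e' = (2 * B') * 2 ^ e := by
        rw [hB', ← pow_succ', ← pow_add]; congr 1; omega
      have hq : ∀ t, (c * 2 ^ e' + t) / 2 ^ e = c * (2 * B') + t / 2 ^ e := by
        intro t
        rw [hsplit, ← Nat.mul_assoc, Nat.mul_comm (c * (2 * B')), Nat.mul_add_div
          (pow_pos (by norm_num : (0:ℕ) < 2) e)]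
      set gq : ℕ → ℝ := fun q => if c * (2 * B') + q = 2 * a then (1:ℝ)
        else if c * (2 * B') + q = 2 * a + 1 then -1 else 0 with hgq
      have : ∀ t ∈ range (2 ^ e'), zf (c * 2 ^ e' + t) = gq (t / 2 ^ e) := by
        intro t _
        simp only [hzf, hgq, hq t]
      rw [Finset.sum_congr rfl this]
      have hrange : (2:ℕ) ^ e' = (2 * B') * 2 ^ e := hsplit
      rw [hrange, sum_div_quot (2^e) (2*B') (pow_pos (by norm_num : (0:ℕ) < 2) e) gq]
      have hz0 : (∑ q ∈ range (2 * B'), gq q) = 0 := by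
        have h2 : c * (2 * B') = 2 * (c * B') := by ring
        simp only [hgq, h2]
        exact cancel_pair a (c * B') B'
      rw [hz0, mul_zero]
  -- the eigenvalue computation
  have hmain : M.mulVec z = (lam * ∑ ℓ' ∈ Ico (ℓ + 1) d, (2 : ℝ) ^ (d - 1 - ℓ') / 2 ^ ℓ') • z := by
    funext j
    have hzzf : ∀ k : Fin n, z k = zf (k : ℕ) := fun k => hz k
    show ∑ k, M j k * z k = _
    have step1 : ∑ k, M j k * z k
        = lam * ∑ ℓ' ∈ range d, ((2 : ℝ) ^ ℓ')⁻¹ *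
          ∑ k ∈ range n, (if (j : ℕ) / 2 ^ (d - 1 - ℓ') = k / 2 ^ (d - 1 - ℓ') then (1:ℝ) else 0) * zf k := by
      have : ∀ k : Fin n, M j k * z k = lam * ∑ ℓ' ∈ range d, ((2 : ℝ) ^ ℓ')⁻¹ *
          ((if (j : ℕ) / 2 ^ (d - 1 - ℓ') = (k:ℕ) / 2 ^ (d - 1 - ℓ') then (1:ℝ) else 0) * zf (k:ℕ)) := by
        intro k
        rw [hM j k, hzzf k, mul_assoc, Finset.sum_mul]
        congr 1
        apply Finset.sum_congr rfl
        intro ℓ' _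
        ring
      rw [Finset.sum_congr rfl (fun k _ => this k)]
      rw [← Finset.mul_sum, Finset.sum_comm]
      congr 1
      apply Finset.sum_congr rfl
      intro ℓ' _
      rw [← Finset.mul_sum]
      congr 1
      exact (Fin.sum_univ_eq_sum_range (fun k =>
        (if (j : ℕ) / 2 ^ (d - 1 - ℓ') = k / 2 ^ (d - 1 - ℓ') then (1:ℝ) else 0) * zf k) n)
    rw [step1]
    have step2 : ∀ ℓ' ∈ range d, ((2 : ℝ) ^ ℓ')⁻¹ *
          (∑ k ∈ range n, (if (j : ℕ) / 2 ^ (d - 1 - ℓ') = k / 2 ^ (d - 1 - ℓ') then (1:ℝ) else 0) * zf k)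
        = if ℓ + 1 ≤ ℓ' then ((2 : ℝ)^(d-1-ℓ') / 2 ^ ℓ') * zf (j:ℕ) else 0 := by
      intro ℓ' hℓ'
      rw [key j ℓ' hℓ']
      split_ifs <;> [skip; simp]
      rw [div_eq_mul_inv]; ring
    rw [Finset.sum_congr rfl step2]
    have hsplitr : range d = Ico 0 d := by rw [Finset.range_eq_Ico]
    rw [hsplitr, ← Finset.sum_Ico_consecutive _ (Nat.zero_le (ℓ+1)) (by omega : ℓ + 1 ≤ d)]
    have hz1 : ∑ ℓ' ∈ Ico 0 (ℓ+1), (if ℓ + 1 ≤ ℓ' then ((2 : ℝ)^(d-1-ℓ') / 2 ^ ℓ') * zf (j:ℕ) else 0) = 0 := by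
      apply Finset.sum_eq_zero
      intro ℓ' hℓ'
      rw [Finset.mem_Ico] at hℓ'
      rw [if_neg (by omega)]
    rw [hz1, zero_add]
    have hz2 : ∑ ℓ' ∈ Ico (ℓ+1) d, (if ℓ + 1 ≤ ℓ' then ((2 : ℝ)^(d-1-ℓ') / 2 ^ ℓ') * zf (j:ℕ) else 0)
        = (∑ ℓ' ∈ Ico (ℓ+1) d, (2 : ℝ)^(d-1-ℓ') / 2 ^ ℓ') * zf (j:ℕ) := by
      rw [eq_comm, Finset.sum_mul]
      apply Finset.sum_congr rfl
      intro ℓ' hℓ'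
      rw [Finset.mem_Ico] at hℓ'
      rw [if_pos (by omega)]
    rw [hz2]
    show _ = (lam * ∑ ℓ' ∈ Ico (ℓ + 1) d, (2 : ℝ) ^ (d - 1 - ℓ') / 2 ^ ℓ') * z j
    rw [hzzf j]
    ring
  refine ⟨hmain, ?_⟩
  -- the eigenvalue lower bound
  have hlam0 : 0 ≤ lam := by
    rw [hlam]
    positivity
  have hterm : (n : ℝ) / 2 ^ (2 * (ℓ + 1)) = (2:ℝ) ^ (d - 1 - (ℓ+1)) / 2 ^ (ℓ+1) := by
    rw [hn]
    push_cast
    rw [div_eq_div_iff (by positivity) (by positivity), ← pow_add, ← pow_add]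
    congr 1
    omega
  have hsum : (2:ℝ) ^ (d - 1 - (ℓ+1)) / 2 ^ (ℓ+1) ≤ ∑ ℓ' ∈ Ico (ℓ + 1) d, (2 : ℝ) ^ (d - 1 - ℓ') / 2 ^ ℓ' := by
    apply Finset.single_le_sum (f := fun ℓ' => (2 : ℝ) ^ (d - 1 - ℓ') / 2 ^ ℓ')
    · intro i _; positivity
    · rw [Finset.mem_Ico]; omega
  calc lam * (n : ℝ) / 2 ^ (2 * (ℓ + 1)) = lam * ((2:ℝ) ^ (d - 1 - (ℓ+1)) / 2 ^ (ℓ+1)) := by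
        rw [mul_div_assoc, hterm]
    _ ≤ lam * ∑ ℓ' ∈ Ico (ℓ + 1) d, (2 : ℝ) ^ (d - 1 - ℓ') / 2 ^ ℓ' :=
        mul_le_mul_of_nonneg_left hsum hlam0
end
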